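/- arXiv:1606.07489 — 2 statements merged into one kernel-verified Lean document; each statement's English description precedes it below -/
import Mathlib

section
/- Let A and B be countable structures (structures in countable relational languages with domain ω). Every continuous group homomorphism from Aut(B) to Aut(A) is of the form G_I for some infinitary interpretation I of A in B. -/
namespace Paper

/-- A structure in a (countable) relational language with arity function `L`,
with domain `ω`.  `rel i` is the interpretation of the `i`-th relation symbol,
of arity `L i`. -/
structure Str (L : ℕ → ℕ) where
  rel : ∀ i, (Fin (L i) → ℕ) → Bool

/-- `g` is an isomorphism from `M` to `N`. -/
def IsIso {L : ℕ → ℕ} (M N : Str L) (g : ℕ ≃ ℕ) : Prop :=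
  ∀ i (v : Fin (L i) → ℕ), M.rel i v = N.rel i fun k => g (v k)

theorem isIso_refl {L : ℕ → ℕ} (M : Str L) : IsIso M M (Equiv.refl ℕ) := fun _ _ => rfl

/-- The automorphism group of `M`, as a subgroup of `S_∞ = Equiv.Perm ℕ`. -/
def aut {L : ℕ → ℕ} (M : Str L) : Subgroup (Equiv.Perm ℕ) where
  carrier := {g | IsIso M M g}
  one_mem' := isIso_refl M
  mul_mem' := by
    intro a b ha hb i v
    exact (hb i v).trans (ha i fun k => b (v k))
  inv_mem' := by
    intro a ha i v
    have h := ha i fun k => a⁻¹ (v k)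
    simpa using h.symm

theorem mem_aut {L : ℕ → ℕ} {M : Str L} {g : Equiv.Perm ℕ} (h : g ∈ aut M) : IsIso M M g := h

/-- The topology of pointwise convergence on `S_∞ = Equiv.Perm ℕ`, i.e. the topology
induced from Baire space `ω^ω`; automorphism groups of countable structures carry the
subspace topology. -/
instance : TopologicalSpace (Equiv.Perm ℕ) :=
  TopologicalSpace.induced (fun g => (g : ℕ → ℕ)) inferInstance

end Paper
namespace Paper

/-- An infinitary interpretation of `A` in `B` (Definition 1.1 of the paper).
The domain `Dom ⊆ B^{<ω}`, the equivalence relation `eqv` and the relations `R i`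
are required to be `L_{ω₁ω}`-definable without parameters in `B`; for countable
structures this is equivalent to invariance under all automorphisms of `B`
(acting coordinatewise on tuples), which is how definability is rendered here.
`F` is the map `f^B_A : Dom → A` inducing an isomorphism
`(Dom/∼; R₀/∼, R₁/∼, …) ≅ (A; P₀^A, P₁^A, …)`. -/
structure Interp {LA LB : ℕ → ℕ} (A : Str LA) (B : Str LB) where
  Dom : Set (List ℕ)
  eqv : List ℕ → List ℕ → Prop
  R : ∀ i, (Fin (LA i) → List ℕ) → Prop
  F : List ℕ → ℕ
  dom_inv : ∀ g ∈ aut B, ∀ l ∈ Dom, List.map (⇑g) l ∈ Dom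
  eqv_inv : ∀ g ∈ aut B, ∀ l₁ ∈ Dom, ∀ l₂ ∈ Dom,
    eqv l₁ l₂ → eqv (List.map (⇑g) l₁) (List.map (⇑g) l₂)
  R_inv : ∀ i, ∀ g ∈ aut B, ∀ v : Fin (LA i) → List ℕ,
    (∀ k, v k ∈ Dom) → R i v → R i fun k => List.map (⇑g) (v k)
  eqv_refl : ∀ l ∈ Dom, eqv l l
  eqv_symm : ∀ l₁ ∈ Dom, ∀ l₂ ∈ Dom, eqv l₁ l₂ → eqv l₂ l₁
  eqv_trans : ∀ l₁ ∈ Dom, ∀ l₂ ∈ Dom, ∀ l₃ ∈ Dom, eqv l₁ l₂ → eqv l₂ l₃ → eqv l₁ l₃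
  R_resp : ∀ i, ∀ v w : Fin (LA i) → List ℕ, (∀ k, v k ∈ Dom) → (∀ k, w k ∈ Dom) →
    (∀ k, eqv (v k) (w k)) → R i v → R i w
  F_surj : ∀ a : ℕ, ∃ l ∈ Dom, F l = a
  F_eqv : ∀ l₁ ∈ Dom, ∀ l₂ ∈ Dom, (F l₁ = F l₂ ↔ eqv l₁ l₂)
  F_rel : ∀ i, ∀ v : Fin (LA i) → List ℕ, (∀ k, v k ∈ Dom) →
    (R i v ↔ A.rel i (fun k => F (v k)) = true)

end Paper
namespace Paper

/-! ### Auxiliary constructions for Theorem 1.3 -/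

/-- Pad the support tuple `t a` with zeros so that its length determines `a`. -/
noncomputable def padded (t : ℕ → List ℕ) (a : ℕ) : List ℕ :=
  t a ++ List.replicate ((∑ b ∈ Finset.range (a + 1), ((t b).length + 1)) - (t a).length) 0

theorem length_padded (t : ℕ → List ℕ) (a : ℕ) :
    (padded t a).length = ∑ b ∈ Finset.range (a + 1), ((t b).length + 1) := by
  have h : (t a).length + 1 ≤ ∑ b ∈ Finset.range (a + 1), ((t b).length + 1) :=
    Finset.single_le_sum (f := fun b => (t b).length + 1) (fun _ _ => Nat.zero_le _)
      (Finset.self_mem_range_succ a)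
  simp only [padded, List.length_append, List.length_replicate]
  omega

theorem padded_len_injective (t : ℕ → List ℕ) {a a' : ℕ}
    (h : (padded t a).length = (padded t a').length) : a = a' := by
  have hmono : StrictMono fun a => ∑ b ∈ Finset.range (a + 1), ((t b).length + 1) :=
    strictMono_nat_of_lt_succ (by
      intro n
      rw [Finset.sum_range_succ (n := n + 1)]
      omega)
  rw [length_padded, length_padded] at h
  exact hmono.injective h

theorem mem_padded (t : ℕ → List ℕ) (a : ℕ) {x : ℕ} (hx : x ∈ t a) : x ∈ padded t a :=
  List.mem_append_left _ hx

open Classical in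
/-- The map `f^B_A` of the interpretation: on `g(s̄_a)` it takes the value `H(g)(a)`. -/
noncomputable def FF {LB : ℕ → ℕ} (B : Str LB) (HA : ↥(aut B) → ℕ → ℕ)
    (s : ℕ → List ℕ) (l : List ℕ) : ℕ :=
  if h : ∃ (a : ℕ) (g : ↥(aut B)), l = List.map (⇑(g : Equiv.Perm ℕ)) (s a)
  then HA h.choose_spec.choose h.choose
  else 0

theorem FF_spec {LB : ℕ → ℕ} (B : Str LB) (HA : ↥(aut B) → ℕ → ℕ) (s : ℕ → List ℕ)
    (hdet : ∀ (a a' : ℕ) (g g' : ↥(aut B)),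
      List.map (⇑(g : Equiv.Perm ℕ)) (s a) = List.map (⇑(g' : Equiv.Perm ℕ)) (s a') →
      HA g a = HA g' a')
    (a : ℕ) (g : ↥(aut B)) :
    FF B HA s (List.map (⇑(g : Equiv.Perm ℕ)) (s a)) = HA g a := by
  unfold FF
  split
  · next h => exact hdet _ _ _ _ h.choose_spec.choose_spec.symm
  · next h => exact absurd ⟨a, g, rfl⟩ h

/-- **Theorem 1.3.** Let `A` and `B` be countable structures.  Every continuous
homomorphism from `Aut(B)` into `Aut(A)` is of the form `G_I` for some infinitary
interpretation `I` of `A` in `B`, i.e. `H(g) = f^B_A ∘ g̃ ∘ (f^B_A)⁻¹` where `g̃` is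
the action of `g` on tuples; equivalently `H(g)(f^B_A(l)) = f^B_A(g̃(l))` for every
`l` in the domain of the interpretation. -/
theorem homo_to_interp (LA LB : ℕ → ℕ) (A : Str LA) (B : Str LB)
    (H : ↥(aut B) →* ↥(aut A))
    (hcont : Continuous fun g : ↥(aut B) => ((H g : Equiv.Perm ℕ) : ℕ → ℕ)) :
    ∃ I : Interp A B, ∀ (g : ↥(aut B)), ∀ l ∈ I.Dom,
      (H g : Equiv.Perm ℕ) (I.F l) = I.F (List.map (⇑(g : Equiv.Perm ℕ)) l) := by
  classical
  -- Step 1: by continuity, every `a` has a finite support.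
  have supp : ∀ a : ℕ, ∃ t : List ℕ,
      ∀ g : ↥(aut B), (∀ x ∈ t, (g : Equiv.Perm ℕ) x = x) → (H g : Equiv.Perm ℕ) a = a := by
    intro a
    set U : Set ↥(aut B) := {g : ↥(aut B) | (H g : Equiv.Perm ℕ) a = a} with hU
    have hUopen : IsOpen U := by
      have h1 : IsOpen {f : ℕ → ℕ | f a = a} := by
        have he : {f : ℕ → ℕ | f a = a} = (fun f : ℕ → ℕ => f a) ⁻¹' {a} := rfl
        rw [he]
        exact (continuous_apply (A := fun _ : ℕ => ℕ) a).isOpen_preimage ({a} : Set ℕ) (isOpen_discrete _)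
      exact hcont.isOpen_preimage _ h1
    have h1U : (1 : ↥(aut B)) ∈ U := by
      simp [hU, map_one]
    have hnhds : U ∈ nhds (1 : ↥(aut B)) := hUopen.mem_nhds h1U
    rw [nhds_subtype, nhds_induced, Filter.comap_comap] at hnhds
    obtain ⟨V, hV, hVU⟩ := Filter.mem_comap.mp hnhds
    obtain ⟨W, hWV, hWopen, hcW⟩ := mem_nhds_iff.mp hV
    obtain ⟨I, u, hIu, hpi⟩ := isOpen_pi_iff.mp hWopen _ hcW
    refine ⟨I.toList, fun g hg => ?_⟩
    have hgW : (⇑((g : Equiv.Perm ℕ)) : ℕ → ℕ) ∈ W := by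
      apply hpi
      intro i hi
      have h1 : (g : Equiv.Perm ℕ) i = i := hg i (Finset.mem_toList.mpr hi)
      have h2 := (hIu i hi).2
      simp only [Function.comp_apply] at h2 ⊢
      rw [h1]
      simpa using h2
    exact hVU (hWV hgW)
  choose t ht using supp
  -- Step 2: agreement on the support determines the image.
  have hagree : ∀ (a : ℕ) (g g' : ↥(aut B)),
      (∀ x ∈ t a, (g : Equiv.Perm ℕ) x = (g' : Equiv.Perm ℕ) x) →
      (H g : Equiv.Perm ℕ) a = (H g' : Equiv.Perm ℕ) a := by
    intro a g g' hx
    have hfix : (H (g'⁻¹ * g) : Equiv.Perm ℕ) a = a := by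
      apply ht a
      intro x hxt
      have h1 : (g : Equiv.Perm ℕ) x = (g' : Equiv.Perm ℕ) x := hx x hxt
      simp [Subgroup.coe_mul, Equiv.Perm.mul_apply, h1]
    conv_lhs => rw [← mul_inv_cancel_left g' g]
    rw [map_mul]
    simp only [Subgroup.coe_mul, Equiv.Perm.mul_apply]
    rw [hfix]
  -- Step 3: well-definedness of `F` on padded tuples.
  have hdet : ∀ (a a' : ℕ) (g g' : ↥(aut B)),
      List.map (⇑(g : Equiv.Perm ℕ)) (padded t a) = List.map (⇑(g' : Equiv.Perm ℕ)) (padded t a') →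
      (fun h => ⇑(H h : Equiv.Perm ℕ)) g a = (fun h => ⇑(H h : Equiv.Perm ℕ)) g' a' := by
    intro a a' g g' hmap
    have hlen : (padded t a).length = (padded t a').length := by
      have := congrArg List.length hmap
      simpa using this
    have haa : a = a' := padded_len_injective t hlen
    subst haa
    have hx : ∀ x ∈ padded t a, (g : Equiv.Perm ℕ) x = (g' : Equiv.Perm ℕ) x :=
      List.map_inj_left.mp hmap
    exact hagree a g g' fun x hxt => hx x (mem_padded t a hxt)
  set F : List ℕ → ℕ := FF B (fun h => ⇑(H h : Equiv.Perm ℕ)) (padded t) with hF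
  have hFspec : ∀ (a : ℕ) (g : ↥(aut B)),
      F (List.map (⇑(g : Equiv.Perm ℕ)) (padded t a)) = (H g : Equiv.Perm ℕ) a :=
    fun a g => FF_spec B _ (padded t) hdet a g
  set Dom : Set (List ℕ) :=
    {l | ∃ (a : ℕ) (g : ↥(aut B)), l = List.map (⇑(g : Equiv.Perm ℕ)) (padded t a)} with hDom
  -- Step 4: equivariance of `Dom` and `F`.
  have hdom_map : ∀ (g : ↥(aut B)), ∀ l ∈ Dom, List.map (⇑(g : Equiv.Perm ℕ)) l ∈ Dom := by
    rintro g l ⟨a, h, rfl⟩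
    refine ⟨a, g * h, ?_⟩
    rw [List.map_map]
    exact List.map_inj_left.mpr fun x _ => by simp [Subgroup.coe_mul, Equiv.Perm.mul_apply]
  have hFmap : ∀ (g : ↥(aut B)), ∀ l ∈ Dom,
      F (List.map (⇑(g : Equiv.Perm ℕ)) l) = (H g : Equiv.Perm ℕ) (F l) := by
    rintro g l ⟨a, h, rfl⟩
    rw [List.map_map]
    have hcomp : (⇑(g : Equiv.Perm ℕ) ∘ ⇑(h : Equiv.Perm ℕ)) =
        ⇑(((g * h : ↥(aut B)) : Equiv.Perm ℕ)) := by
      ext x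
      simp [Subgroup.coe_mul, Equiv.Perm.mul_apply]
    rw [hcomp, hFspec a (g * h), hFspec a h, map_mul]
    simp [Subgroup.coe_mul, Equiv.Perm.mul_apply]
  -- Step 5: assemble the interpretation.
  refine ⟨{
    Dom := Dom
    eqv := fun l₁ l₂ => l₁ ∈ Dom ∧ l₂ ∈ Dom ∧ F l₁ = F l₂
    R := fun i v => A.rel i (fun k => F (v k)) = true
    F := F
    dom_inv := fun g hg l hl => hdom_map ⟨g, hg⟩ l hl
    eqv_inv := fun g hg l₁ h₁ l₂ h₂ he =>
      ⟨hdom_map ⟨g, hg⟩ l₁ h₁, hdom_map ⟨g, hg⟩ l₂ h₂, by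
        rw [hFmap ⟨g, hg⟩ l₁ h₁, hFmap ⟨g, hg⟩ l₂ h₂, he.2.2]⟩
    R_inv := by
      intro i g hg v hv hR
      have h1 : ∀ k, F (List.map (⇑g) (v k)) = (H ⟨g, hg⟩ : Equiv.Perm ℕ) (F (v k)) :=
        fun k => hFmap ⟨g, hg⟩ (v k) (hv k)
      show A.rel i (fun k => F (List.map (⇑g) (v k))) = true
      rw [show (fun k => F (List.map (⇑g) (v k))) =
          (fun k => (H ⟨g, hg⟩ : Equiv.Perm ℕ) (F (v k))) from funext h1,
        ← mem_aut (H ⟨g, hg⟩).2 i (fun k => F (v k))]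
      exact hR
    eqv_refl := fun l hl => ⟨hl, hl, rfl⟩
    eqv_symm := fun l₁ _ l₂ _ he => ⟨he.2.1, he.1, he.2.2.symm⟩
    eqv_trans := fun l₁ _ l₂ _ l₃ _ h12 h23 => ⟨h12.1, h23.2.1, h12.2.2.trans h23.2.2⟩
    R_resp := by
      intro i v w hv hw he hR
      show A.rel i (fun k => F (w k)) = true
      rw [show (fun k => F (w k)) = (fun k => F (v k)) from
        funext fun k => ((he k).2.2).symm]
      exact hR
    F_surj := by
      intro a
      have h1 : List.map (⇑(((1 : ↥(aut B)) : Equiv.Perm ℕ))) (padded t a) = padded t a := by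
        simp
      refine ⟨padded t a, ⟨a, 1, h1.symm⟩, ?_⟩
      have h2 := hFspec a 1
      rw [h1] at h2
      simpa using h2
    F_eqv := fun l₁ h₁ l₂ h₂ => ⟨fun h => ⟨h₁, h₂, h⟩, fun h => h.2.2⟩
    F_rel := fun i v _ => Iff.rfl
  }, ?_⟩
  intro g l hl
  exact (hFmap g l hl).symm

end Paper
end

section
/- Let A be a countable structure. The following are equivalent: (1) there is a continuous group homomorphism from Aut(A) onto S_∞; (2) there are an n ∈ ω, a subset D ⊆ A^n definable without parameters by an L_{ω₁ω} formula (equivalently, invariant under all automorphisms of A), and an L_{ω₁ω}-definable (equivalently, automorphism-invariant) equivalence relation E ⊆ D² with infinitely many equivalence classes, such that the E-equivalence classes are absolutely indiscernible, i.e., every permutation of the set of E-equivalence classes extends to an automorphism of A. -/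
namespace Paper

-- coercion map from aut A to ℕ → ℕ is inducing
theorem coe_inducing {L : ℕ → ℕ} (A : Str L) :
    Topology.IsInducing (fun g : ↥(aut A) => ((g : Equiv.Perm ℕ) : ℕ → ℕ)) := by
  constructor
  show TopologicalSpace.induced (Subtype.val) _ = _
  show TopologicalSpace.induced (Subtype.val)
      (TopologicalSpace.induced (fun g : Equiv.Perm ℕ => (g : ℕ → ℕ)) inferInstance) = _
  rw [induced_compose]
  rfl

theorem exists_stab {L : ℕ → ℕ} (A : Str L) (H : ↥(aut A) →* Equiv.Perm ℕ)
    (hc : Continuous fun g : ↥(aut A) => ((H g : Equiv.Perm ℕ) : ℕ → ℕ)) :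
    ∃ N : ℕ, ∀ g : ↥(aut A), (∀ i < N, (g : Equiv.Perm ℕ) i = i) → (H g) 0 = 0 := by
  have hU : IsOpen {g : ↥(aut A) | (H g) 0 = 0} := by
    have : Continuous fun g : ↥(aut A) => (H g) 0 := (continuous_apply 0).comp hc
    exact (isOpen_discrete ({0} : Set ℕ)).preimage this
  obtain ⟨V, hV, hVeq⟩ := (coe_inducing A).isOpen_iff.mp hU
  have h1 : (id : ℕ → ℕ) ∈ V := by
    have : (1 : ↥(aut A)) ∈ {g : ↥(aut A) | (H g) 0 = 0} := by simp
    rw [← hVeq] at this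
    exact this
  obtain ⟨I, u, hu, hsub⟩ := isOpen_pi_iff.mp hV id h1
  refine ⟨I.sup id + 1, fun g hg => ?_⟩
  have : ((g : Equiv.Perm ℕ) : ℕ → ℕ) ∈ (I : Set ℕ).pi u := by
    intro i hi
    have hiN : i < I.sup id + 1 := Nat.lt_succ_of_le (Finset.le_sup (f := id) hi)
    rw [hg i hiN]
    exact (hu i hi).2
  have h2 := hsub this
  have h3 : g ∈ (fun g : ↥(aut A) => ((g : Equiv.Perm ℕ) : ℕ → ℕ)) ⁻¹' V := h2
  rw [hVeq] at h3
  exact h3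


theorem forward {L : ℕ → ℕ} (A : Str L) (H : ↥(aut A) →* Equiv.Perm ℕ)
    (hc : Continuous fun g : ↥(aut A) => ((H g : Equiv.Perm ℕ) : ℕ → ℕ))
    (hs : Function.Surjective H) :
    (∃ (n : ℕ) (D : Set (Fin n → ℕ)) (E : (Fin n → ℕ) → (Fin n → ℕ) → Prop),
      (∀ g : Equiv.Perm ℕ, IsIso A A g → ∀ v ∈ D, (fun k => g (v k)) ∈ D) ∧
      (∀ g : Equiv.Perm ℕ, IsIso A A g → ∀ v ∈ D, ∀ w ∈ D,
        E v w → E (fun k => g (v k)) (fun k => g (w k))) ∧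
      (∀ v ∈ D, E v v) ∧
      (∀ v ∈ D, ∀ w ∈ D, E v w → E w v) ∧
      (∀ v ∈ D, ∀ w ∈ D, ∀ u ∈ D, E v w → E w u → E v u) ∧
      (∃ r : ℕ → (Fin n → ℕ), (∀ k, r k ∈ D) ∧ ∀ k l : ℕ, k ≠ l → ¬E (r k) (r l)) ∧
      (∀ π : (Fin n → ℕ) → (Fin n → ℕ),
        (∀ v ∈ D, π v ∈ D) →
        (∀ v ∈ D, ∀ w ∈ D, (E v w ↔ E (π v) (π w))) →
        (∀ w ∈ D, ∃ v ∈ D, E (π v) w) →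
        ∃ g : Equiv.Perm ℕ, IsIso A A g ∧ ∀ v ∈ D, E (fun k => g (v k)) (π v))) := by
  classical
  obtain ⟨N, hN⟩ := exists_stab A H hc
  set D : Set (Fin N → ℕ) := {v | ∃ g : ↥(aut A), ∀ k : Fin N, (g : Equiv.Perm ℕ) (k : ℕ) = v k}
    with hD
  set φ : (Fin N → ℕ) → ℕ :=
    fun v => if h : v ∈ D then H (Classical.choose h) 0 else 0 with hφ
  -- well-definedness
  have wd : ∀ (g g' : ↥(aut A)), (∀ k : Fin N, (g : Equiv.Perm ℕ) (k : ℕ) = (g' : Equiv.Perm ℕ) (k : ℕ)) →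
      (H g) 0 = (H g') 0 := by
    intro g g' hgg'
    have hfix : ∀ i < N, ((g'⁻¹ * g : ↥(aut A)) : Equiv.Perm ℕ) i = i := by
      intro i hi
      have h1 : ((g'⁻¹ * g : ↥(aut A)) : Equiv.Perm ℕ) i
          = (g' : Equiv.Perm ℕ)⁻¹ ((g : Equiv.Perm ℕ) i) := rfl
      rw [h1]
      have h2 := hgg' ⟨i, hi⟩
      simp only [Fin.val_mk] at h2  -- coercion (⟨i,hi⟩ : Fin N) : ℕ = i
      rw [h2]
      simp
    have := hN _ hfix
    rw [map_mul, map_inv] at this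
    have h3 : (H g') ((H g')⁻¹ ((H g) 0)) = (H g') 0 := congrArg _ this
    simpa using h3
  have phi_eq : ∀ (g : ↥(aut A)) (v : Fin N → ℕ),
      (∀ k : Fin N, (g : Equiv.Perm ℕ) (k : ℕ) = v k) → φ v = (H g) 0 := by
    intro g v hg
    have hv : v ∈ D := ⟨g, hg⟩
    rw [hφ]
    simp only [dif_pos hv]
    refine wd _ _ fun k => ?_
    rw [Classical.choose_spec hv k, hg k]
  -- membership gives a witness
  have memD : ∀ v ∈ D, ∃ g : ↥(aut A), (∀ k : Fin N, (g : Equiv.Perm ℕ) (k : ℕ) = v k) := fun v hv => hv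
  set E : (Fin N → ℕ) → (Fin N → ℕ) → Prop := fun v w => v ∈ D ∧ w ∈ D ∧ φ v = φ w with hE
  -- invariance of D
  have hDinv : ∀ g : Equiv.Perm ℕ, IsIso A A g → ∀ v ∈ D, (fun k => g (v k)) ∈ D := by
    intro g hg v hv
    obtain ⟨gv, hgv⟩ := memD v hv
    exact ⟨(⟨g, hg⟩ : ↥(aut A)) * gv, fun k => by
      have : ((⟨g, hg⟩ * gv : ↥(aut A)) : Equiv.Perm ℕ) (k : ℕ) = g ((gv : Equiv.Perm ℕ) (k : ℕ)) := rfl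
      rw [this, hgv k]⟩
  -- φ of image
  have phi_img : ∀ (g : ↥(aut A)) (v : Fin N → ℕ), v ∈ D →
      φ (fun k => (g : Equiv.Perm ℕ) (v k)) = (H g) (φ v) := by
    intro g v hv
    obtain ⟨gv, hgv⟩ := memD v hv
    have h1 : φ (fun k => (g : Equiv.Perm ℕ) (v k)) = (H (g * gv)) 0 := by
      refine phi_eq (g * gv) _ fun k => ?_
      have : ((g * gv : ↥(aut A)) : Equiv.Perm ℕ) (k : ℕ) = (g : Equiv.Perm ℕ) ((gv : Equiv.Perm ℕ) (k : ℕ)) := rfl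
      rw [this, hgv k]
    rw [h1, map_mul]
    have h2 : φ v = (H gv) 0 := phi_eq gv v hgv
    rw [h2]
    rfl
  -- representatives
  set r : ℕ → (Fin N → ℕ) :=
    fun m => fun k => ((Classical.choose (hs (Equiv.swap 0 m)) : ↥(aut A)) : Equiv.Perm ℕ) (k : ℕ) with hr
  have hrD : ∀ m, r m ∈ D := fun m => ⟨Classical.choose (hs (Equiv.swap 0 m)), fun k => rfl⟩
  have hrφ : ∀ m, φ (r m) = m := by
    intro m
    have h1 : φ (r m) = (H (Classical.choose (hs (Equiv.swap 0 m)))) 0 :=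
      phi_eq _ _ fun k => rfl
    rw [h1, Classical.choose_spec (hs (Equiv.swap 0 m))]
    simp
  refine ⟨N, D, E, hDinv, ?_, ?_, ?_, ?_, ?_, ?_⟩
  · -- E invariance
    intro g hg v hv w hw ⟨_, _, hvw⟩
    refine ⟨hDinv g hg v hv, hDinv g hg w hw, ?_⟩
    have h1 := phi_img ⟨g, hg⟩ v hv
    have h2 := phi_img ⟨g, hg⟩ w hw
    show φ (fun k => g (v k)) = φ (fun k => g (w k))
    rw [h1, h2, hvw]
  · exact fun v hv => ⟨hv, hv, rfl⟩
  · exact fun v _ w _ ⟨h1, h2, h3⟩ => ⟨h2, h1, h3.symm⟩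
  · exact fun v _ w _ u _ ⟨h1, _, h3⟩ ⟨_, h5, h6⟩ => ⟨h1, h5, h3.trans h6⟩
  · exact ⟨r, hrD, fun k l hkl ⟨_, _, h⟩ => hkl (by rw [hrφ k, hrφ l] at h; exact h)⟩
  · -- absolute indiscernibility
    intro π hπD hπE hπsurj
    set σ : ℕ → ℕ := fun m => φ (π (r m)) with hσ
    have key : ∀ v ∈ D, σ (φ v) = φ (π v) := by
      intro v hv
      have hmem := hrD (φ v)
      have hEvr : E v (r (φ v)) := ⟨hv, hmem, (hrφ (φ v)).symm⟩
      have := (hπE v hv (r (φ v)) hmem).mp hEvr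
      exact this.2.2.symm
    have hinj : Function.Injective σ := by
      intro m l hml
      have hEp : E (π (r m)) (π (r l)) := ⟨hπD _ (hrD m), hπD _ (hrD l), hml⟩
      have := (hπE (r m) (hrD m) (r l) (hrD l)).mpr hEp
      have := this.2.2
      rw [hrφ m, hrφ l] at this
      exact this
    have hsurjσ : Function.Surjective σ := by
      intro m
      obtain ⟨v, hv, hEv⟩ := hπsurj (r m) (hrD m)
      refine ⟨φ v, ?_⟩
      rw [key v hv]
      have := hEv.2.2
      rw [hrφ m] at this
      exact this
    set σ' : Equiv.Perm ℕ := Equiv.ofBijective σ ⟨hinj, hsurjσ⟩ with hσ'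
    obtain ⟨g0, hg0⟩ := hs σ'
    refine ⟨(g0 : Equiv.Perm ℕ), g0.2, fun v hv => ?_⟩
    refine ⟨hDinv _ g0.2 v hv, hπD v hv, ?_⟩
    show φ (fun k => (g0 : Equiv.Perm ℕ) (v k)) = φ (π v)
    rw [phi_img g0 v hv, hg0, ← key v hv]
    rfl


theorem backward {L : ℕ → ℕ} (A : Str L) (n : ℕ) (D : Set (Fin n → ℕ))
    (E : (Fin n → ℕ) → (Fin n → ℕ) → Prop)
    (hDinv : ∀ g : Equiv.Perm ℕ, IsIso A A g → ∀ v ∈ D, (fun k => g (v k)) ∈ D)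
    (hEinv : ∀ g : Equiv.Perm ℕ, IsIso A A g → ∀ v ∈ D, ∀ w ∈ D,
      E v w → E (fun k => g (v k)) (fun k => g (w k)))
    (hrefl : ∀ v ∈ D, E v v)
    (hsymm : ∀ v ∈ D, ∀ w ∈ D, E v w → E w v)
    (htrans : ∀ v ∈ D, ∀ w ∈ D, ∀ u ∈ D, E v w → E w u → E v u)
    (hinf : ∃ r : ℕ → (Fin n → ℕ), (∀ k, r k ∈ D) ∧ ∀ k l : ℕ, k ≠ l → ¬E (r k) (r l))
    (habs : ∀ π : (Fin n → ℕ) → (Fin n → ℕ),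
      (∀ v ∈ D, π v ∈ D) →
      (∀ v ∈ D, ∀ w ∈ D, (E v w ↔ E (π v) (π w))) →
      (∀ w ∈ D, ∃ v ∈ D, E (π v) w) →
      ∃ g : Equiv.Perm ℕ, IsIso A A g ∧ ∀ v ∈ D, E (fun k => g (v k)) (π v)) :
    ∃ H : ↥(aut A) →* Equiv.Perm ℕ,
      (Continuous fun g : ↥(aut A) => ((H g : Equiv.Perm ℕ) : ℕ → ℕ)) ∧
      Function.Surjective H := by
  classical
  set S : Setoid {v : Fin n → ℕ // v ∈ D} :=
    ⟨fun a b => E a.1 b.1,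
     ⟨fun a => hrefl a.1 a.2, fun {a b} h => hsymm a.1 a.2 b.1 b.2 h,
      fun {a b c} h1 h2 => htrans a.1 a.2 b.1 b.2 c.1 c.2 h1 h2⟩⟩ with hS
  -- the quotient is countably infinite
  obtain ⟨r, hrD, hrE⟩ := hinf
  have hrinj : Function.Injective (fun m => Quotient.mk S ⟨r m, hrD m⟩) := by
    intro k l hkl
    by_contra hne
    exact hrE k l hne (Quotient.eq.mp hkl)
  have : Infinite (Quotient S) := Infinite.of_injective _ hrinj
  obtain ⟨e⟩ : Nonempty (Quotient S ≃ ℕ) := nonempty_equiv_of_countable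
  -- the action of an automorphism on the quotient
  set act : ∀ g : ↥(aut A), Quotient S → Quotient S :=
    fun g => Quotient.lift
      (fun a : {v // v ∈ D} => Quotient.mk S ⟨fun k => (g : Equiv.Perm ℕ) (a.1 k), hDinv _ g.2 a.1 a.2⟩)
      (fun a b hab => Quotient.sound (hEinv _ g.2 a.1 a.2 b.1 b.2 hab)) with hact
  have act_mk : ∀ (g : ↥(aut A)) (a : {v // v ∈ D}),
      act g (Quotient.mk S a) = Quotient.mk S ⟨fun k => (g : Equiv.Perm ℕ) (a.1 k), hDinv _ g.2 a.1 a.2⟩ :=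
    fun g a => rfl
  have act_mul : ∀ (g h : ↥(aut A)) (q : Quotient S), act (g * h) q = act g (act h q) := by
    intro g h q
    induction q using Quotient.ind with
    | _ a => rfl
  have act_one : ∀ q : Quotient S, act 1 q = q := by
    intro q
    induction q using Quotient.ind with
    | _ a =>
      rw [act_mk]
      congr 1
  have act_inv : ∀ (g : ↥(aut A)) (q : Quotient S), act g⁻¹ (act g q) = q := by
    intro g q
    rw [← act_mul, inv_mul_cancel, act_one]
  have act_inv' : ∀ (g : ↥(aut A)) (q : Quotient S), act g (act g⁻¹ q) = q := by
    intro g q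
    rw [← act_mul, mul_inv_cancel, act_one]
  -- the homomorphism
  set Hfun : ↥(aut A) → Equiv.Perm ℕ :=
    fun g => Equiv.trans (Equiv.trans e.symm ⟨act g, act g⁻¹, act_inv g, act_inv' g⟩) e with hHfun
  have Hfun_apply : ∀ (g : ↥(aut A)) (m : ℕ), (Hfun g) m = e (act g (e.symm m)) := fun g m => rfl
  set H : ↥(aut A) →* Equiv.Perm ℕ := MonoidHom.mk' Hfun (by
    intro g h
    ext m
    show e (act (g * h) (e.symm m)) = e (act g (e.symm (e (act h (e.symm m)))))
    rw [Equiv.symm_apply_apply, act_mul]) with hH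
  refine ⟨H, ?_, ?_⟩
  · -- continuity
    have hcoe : Continuous fun g : ↥(aut A) => ((g : Equiv.Perm ℕ) : ℕ → ℕ) :=
      continuous_induced_dom.comp continuous_subtype_val
    apply continuous_pi
    intro m
    set w : {v // v ∈ D} := Quotient.out (e.symm m) with hw
    set F : (Fin n → ℕ) → ℕ :=
      fun u => if hu : u ∈ D then e (Quotient.mk S ⟨u, hu⟩) else 0 with hF
    have hfactor : ∀ g : ↥(aut A), (H g : Equiv.Perm ℕ) m = F (fun k => (g : Equiv.Perm ℕ) (w.1 k)) := by
      intro g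
      have h1 : (H g : Equiv.Perm ℕ) m = e (act g (e.symm m)) := rfl
      have h2 : e.symm m = Quotient.mk S w := (Quotient.out_eq (e.symm m)).symm
      rw [h1, h2, act_mk]
      have hmem : (fun k => (g : Equiv.Perm ℕ) (w.1 k)) ∈ D := hDinv _ g.2 w.1 w.2
      rw [hF]
      simp only [dif_pos hmem]
    have hcont2 : Continuous fun g : ↥(aut A) => (fun k => (g : Equiv.Perm ℕ) (w.1 k) : Fin n → ℕ) := by
      apply continuous_pi
      intro k
      exact (continuous_apply (w.1 k)).comp hcoe
    have : Continuous fun g : ↥(aut A) => F (fun k => (g : Equiv.Perm ℕ) (w.1 k)) :=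
      (continuous_of_discreteTopology (f := F)).comp hcont2
    exact this.congr fun g => (hfactor g).symm
  · -- surjectivity
    intro s
    set π : (Fin n → ℕ) → (Fin n → ℕ) :=
      fun v => if hv : v ∈ D then (Quotient.out (e.symm (s (e (Quotient.mk S ⟨v, hv⟩))))).1 else v
      with hπ
    have hπD : ∀ v ∈ D, π v ∈ D := by
      intro v hv
      rw [hπ]
      simp only [dif_pos hv]
      exact (Quotient.out (e.symm (s (e (Quotient.mk S ⟨v, hv⟩))))).2
    have hclsπ : ∀ v (hv : v ∈ D) (h2 : π v ∈ D),
        Quotient.mk S ⟨π v, h2⟩ = e.symm (s (e (Quotient.mk S ⟨v, hv⟩))) := by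
      intro v hv h2
      have h3 : π v = (Quotient.out (e.symm (s (e (Quotient.mk S ⟨v, hv⟩))))).1 := by
        rw [hπ]; simp only [dif_pos hv]
      have h4 : (⟨π v, h2⟩ : {v // v ∈ D}) = Quotient.out (e.symm (s (e (Quotient.mk S ⟨v, hv⟩)))) :=
        Subtype.ext h3
      rw [h4, Quotient.out_eq]
    have hπE : ∀ v ∈ D, ∀ w ∈ D, (E v w ↔ E (π v) (π w)) := by
      intro v hv w hw
      have h1 : E v w ↔ Quotient.mk S ⟨v, hv⟩ = Quotient.mk S ⟨w, hw⟩ :=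
        ⟨fun h => Quotient.sound h, fun h => Quotient.exact h⟩
      have h2 : E (π v) (π w) ↔ Quotient.mk S ⟨π v, hπD v hv⟩ = Quotient.mk S ⟨π w, hπD w hw⟩ :=
        ⟨fun h => Quotient.sound h, fun h => Quotient.exact h⟩
      rw [h1, h2, hclsπ v hv (hπD v hv), hclsπ w hw (hπD w hw)]
      constructor
      · intro h; rw [h]
      · intro h
        exact e.injective (s.injective (e.symm.injective h))
    have hπsurj : ∀ w ∈ D, ∃ v ∈ D, E (π v) w := by
      intro w hw
      set q : Quotient S := e.symm (s⁻¹ (e (Quotient.mk S ⟨w, hw⟩))) with hq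
      refine ⟨(Quotient.out q).1, (Quotient.out q).2, ?_⟩
      have hcls : Quotient.mk S ⟨π (Quotient.out q).1, hπD _ (Quotient.out q).2⟩
          = Quotient.mk S ⟨w, hw⟩ := by
        rw [hclsπ _ (Quotient.out q).2 (hπD _ (Quotient.out q).2)]
        have : Quotient.mk S ⟨(Quotient.out q).1, (Quotient.out q).2⟩ = q := by
          have : (⟨(Quotient.out q).1, (Quotient.out q).2⟩ : {v // v ∈ D}) = Quotient.out q :=
            Subtype.ext rfl
          rw [this, Quotient.out_eq]
        rw [this, hq, Equiv.apply_symm_apply, Equiv.Perm.inv_def, Equiv.apply_symm_apply, Equiv.symm_apply_apply]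
      exact Quotient.exact hcls
    obtain ⟨g, hgiso, hgE⟩ := habs π hπD hπE hπsurj
    refine ⟨⟨g, hgiso⟩, ?_⟩
    ext m
    set q : Quotient S := e.symm m with hq
    set a : {v // v ∈ D} := Quotient.out q with ha
    have h1 : (H ⟨g, hgiso⟩ : Equiv.Perm ℕ) m = e (act ⟨g, hgiso⟩ q) := rfl
    have h2 : q = Quotient.mk S a := (Quotient.out_eq q).symm
    have h3 : act (⟨g, hgiso⟩ : ↥(aut A)) (Quotient.mk S a)
        = Quotient.mk S ⟨fun k => g (a.1 k), hDinv _ hgiso a.1 a.2⟩ := rfl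
    have h4 : Quotient.mk S (⟨fun k => g (a.1 k), hDinv _ hgiso a.1 a.2⟩ : {v // v ∈ D})
        = Quotient.mk S ⟨π a.1, hπD a.1 a.2⟩ := Quotient.sound (hgE a.1 a.2)
    have h5 : Quotient.mk S (⟨π a.1, hπD a.1 a.2⟩ : {v // v ∈ D})
        = e.symm (s (e (Quotient.mk S ⟨a.1, a.2⟩))) := hclsπ a.1 a.2 (hπD a.1 a.2)
    have h6 : Quotient.mk S (⟨a.1, a.2⟩ : {v // v ∈ D}) = q := by
      have : (⟨a.1, a.2⟩ : {v // v ∈ D}) = a := Subtype.ext rfl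
      rw [this, ha, Quotient.out_eq]
    rw [h1, h2, h3, h4, h5, h6, hq, Equiv.apply_symm_apply, Equiv.apply_symm_apply]


/-- **Theorem 1.4.** Let `A` be a countable structure.  There is a continuous
homomorphism from `Aut(A)` onto `S_∞` if and only if there are `n`, an
`L_{ω₁ω}`-definable (equivalently, automorphism-invariant) set `D ⊆ A^n` and an
`L_{ω₁ω}`-definable (equivalently, automorphism-invariant) equivalence relation
`E ⊆ D²` with infinitely many classes whose classes are absolutely indiscernible:
every permutation of the `E`-classes extends to an automorphism of `A`. -/
theorem aut_onto_Sinfty_iff_absolute_indiscernibles (L : ℕ → ℕ) (A : Str L) :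
    (∃ H : ↥(aut A) →* Equiv.Perm ℕ,
      (Continuous fun g : ↥(aut A) => ((H g : Equiv.Perm ℕ) : ℕ → ℕ)) ∧
      Function.Surjective H) ↔
    (∃ (n : ℕ) (D : Set (Fin n → ℕ)) (E : (Fin n → ℕ) → (Fin n → ℕ) → Prop),
      -- `D` is invariant under all automorphisms of `A`
      (∀ g : Equiv.Perm ℕ, IsIso A A g → ∀ v ∈ D, (fun k => g (v k)) ∈ D) ∧
      -- `E` is invariant under all automorphisms of `A`
      (∀ g : Equiv.Perm ℕ, IsIso A A g → ∀ v ∈ D, ∀ w ∈ D,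
        E v w → E (fun k => g (v k)) (fun k => g (w k))) ∧
      -- `E` is an equivalence relation on `D`
      (∀ v ∈ D, E v v) ∧
      (∀ v ∈ D, ∀ w ∈ D, E v w → E w v) ∧
      (∀ v ∈ D, ∀ w ∈ D, ∀ u ∈ D, E v w → E w u → E v u) ∧
      -- `E` has infinitely many equivalence classes
      (∃ r : ℕ → (Fin n → ℕ), (∀ k, r k ∈ D) ∧ ∀ k l : ℕ, k ≠ l → ¬E (r k) (r l)) ∧
      -- the `E`-classes are absolutely indiscernible: every permutation `π` of the
      -- classes (presented by its action on representatives) extends to an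
      -- automorphism `g` of `A`, in the sense that `g(v̄)` lies in the class `π([v̄])`
      (∀ π : (Fin n → ℕ) → (Fin n → ℕ),
        (∀ v ∈ D, π v ∈ D) →
        (∀ v ∈ D, ∀ w ∈ D, (E v w ↔ E (π v) (π w))) →
        (∀ w ∈ D, ∃ v ∈ D, E (π v) w) →
        ∃ g : Equiv.Perm ℕ, IsIso A A g ∧ ∀ v ∈ D, E (fun k => g (v k)) (π v))) := by
  constructor
  · rintro ⟨H, hc, hs⟩
    exact forward A H hc hs
  · rintro ⟨n, D, E, h1, h2, h3, h4, h5, h6, h7⟩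
    exact backward A n D E h1 h2 h3 h4 h5 h6 h7

end Paper
end
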